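/- Let a, b, c, A, B be real numbers with a > 0, b > 0, c > 0 and A ≤ B. Then every point of the closed interval [A, B] lies in the closure of the set { (k·a·A + m·b·B)/(k·a + m·b + c) : k, m ∈ ℕ, k + m > 0 }. -/

import Mathlib

/-- Weighted means with a fixed offset `c > 0` in the denominator,
`(k·a·A + m·b·B)/(k·a + m·b + c)` over `k, m ∈ ℕ` with `k + m > 0`,
are still dense in `[A, B]` whenever `a, b, c > 0` and `A ≤ B`. -/
theorem weighted_means_offset_dense (a b c A B : ℝ)
    (ha : 0 < a) (hb : 0 < b) (hc : 0 < c) (hAB : A ≤ B) :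
    ∀ x ∈ Set.Icc A B,
      x ∈ closure {y : ℝ | ∃ k m : ℕ, 0 < k + m ∧
        y = ((k : ℝ) * a * A + (m : ℝ) * b * B) / ((k : ℝ) * a + (m : ℝ) * b + c)} := by
  intro x hx
  rw [Metric.mem_closure_iff]
  intro ε hε
  obtain ⟨hAx, hxB⟩ := hx
  -- the barycentric coordinate of x
  obtain ⟨t, ht0, ht1, hxt⟩ : ∃ t : ℝ, 0 ≤ t ∧ t ≤ 1 ∧ x = A + t * (B - A) := by
    rcases lt_or_ge A B with h | h
    · refine ⟨(x - A) / (B - A), div_nonneg (by linarith) (by linarith), ?_, ?_⟩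
      · rw [div_le_one (by linarith)]; linarith
      · have hBA : B - A ≠ 0 := ne_of_gt (by linarith)
        field_simp
        ring
    · have hEq : A = B := le_antisymm hAB h
      have hx' : x = A := le_antisymm (hEq ▸ hxB) hAx
      exact ⟨1/2, by norm_num, by norm_num, by rw [hx', hEq]; ring⟩
  have hxabs : |x| ≤ |A| + |B| := by
    rw [abs_le]
    have h1 := neg_abs_le A
    have h2 := le_abs_self B
    have h3 := abs_nonneg A
    have h4 := abs_nonneg B
    constructor <;> linarith
  set C : ℝ := (B - A) * (a + b) + (|A| + |B|) * c with hC
  have hC0 : 0 ≤ C := by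
    have h1 : 0 ≤ (B - A) * (a + b) := mul_nonneg (by linarith) (by linarith)
    have h2 : 0 ≤ (|A| + |B|) * c := mul_nonneg (by positivity) hc.le
    linarith
  obtain ⟨N, hN⟩ := exists_nat_gt ((C / ε + a + b) / (a * b))
  have habN : C / ε + a + b < a * b * N := by
    rw [div_lt_iff₀ (mul_pos ha hb)] at hN
    linarith
  have hCe : 0 ≤ C / ε := div_nonneg hC0 hε.le
  have hN0 : (0:ℝ) ≤ (N : ℝ) := Nat.cast_nonneg N
  have hu0 : 0 ≤ (1 - t) * b * (N : ℝ) :=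
    mul_nonneg (mul_nonneg (by linarith) hb.le) hN0
  have hv0 : 0 ≤ t * a * (N : ℝ) :=
    mul_nonneg (mul_nonneg ht0 ha.le) hN0
  obtain ⟨k, hk1, hk2⟩ : ∃ k : ℕ, (k : ℝ) ≤ (1 - t) * b * (N : ℝ) ∧
      (1 - t) * b * (N : ℝ) < (k : ℝ) + 1 :=
    ⟨⌊(1 - t) * b * (N : ℝ)⌋₊, Nat.floor_le hu0, Nat.lt_floor_add_one _⟩
  obtain ⟨m, hm1, hm2⟩ : ∃ m : ℕ, (m : ℝ) ≤ t * a * (N : ℝ) ∧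
      t * a * (N : ℝ) < (m : ℝ) + 1 :=
    ⟨⌊t * a * (N : ℝ)⌋₊, Nat.floor_le hv0, Nat.lt_floor_add_one _⟩
  have hk0 : (0:ℝ) ≤ (k : ℝ) := Nat.cast_nonneg k
  have hm0 : (0:ℝ) ≤ (m : ℝ) := Nat.cast_nonneg m
  have hs_pos : 0 < (k : ℝ) * a + (m : ℝ) * b + c := by
    have h1 : (0:ℝ) ≤ (k : ℝ) * a := mul_nonneg hk0 ha.le
    have h2 : (0:ℝ) ≤ (m : ℝ) * b := mul_nonneg hm0 hb.le
    linarith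
  -- lower bound on the denominator
  have hD : a * b * N - (a + b) + c < (k : ℝ) * a + (m : ℝ) * b + c := by
    have h1 : ((1 - t) * b * (N : ℝ) - 1) * a < (k : ℝ) * a :=
      mul_lt_mul_of_pos_right (by linarith) ha
    have h2 : (t * a * (N : ℝ) - 1) * b < (m : ℝ) * b :=
      mul_lt_mul_of_pos_right (by linarith) hb
    have h3 : ((1 - t) * b * (N : ℝ) - 1) * a + (t * a * (N : ℝ) - 1) * b
        = a * b * N - (a + b) := by ring
    linarith
  have hD_pos : 0 < a * b * N - (a + b) + c := by linarith
  have hkm : 0 < k + m := by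
    rcases Nat.eq_zero_or_pos (k + m) with h | h
    · exfalso
      obtain ⟨hk', hm'⟩ := Nat.add_eq_zero.1 h
      rw [hk', hm'] at hD
      push_cast at hD
      linarith
    · exact h
  -- the approximating point
  refine ⟨((k : ℝ) * a * A + (m : ℝ) * b * B) / ((k : ℝ) * a + (m : ℝ) * b + c),
    ⟨k, m, hkm, rfl⟩, ?_⟩
  rw [Real.dist_eq]
  -- key algebraic identity
  have key : x * ((k : ℝ) * a + (m : ℝ) * b + c) - ((k : ℝ) * a * A + (m : ℝ) * b * B)
      = x * c - (B - A) * ((m : ℝ) * b * (1 - t) - (k : ℝ) * a * t) := by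
    rw [hxt]; ring
  -- bound the oscillating part
  have hE : |(m : ℝ) * b * (1 - t) - (k : ℝ) * a * t| ≤ a + b := by
    have hexpr : (m : ℝ) * b * (1 - t) - (k : ℝ) * a * t
        = ((1 - t) * b * (N : ℝ) - (k : ℝ)) * (a * t)
          - (t * a * (N : ℝ) - (m : ℝ)) * (b * (1 - t)) := by
      ring
    have hat0 : 0 ≤ a * t := mul_nonneg ha.le ht0
    have hat1 : a * t ≤ a := by
      have := mul_le_mul_of_nonneg_left ht1 ha.le
      linarith
    have hbt0 : 0 ≤ b * (1 - t) := mul_nonneg hb.le (by linarith)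
    have hbt1 : b * (1 - t) ≤ b := by
      have := mul_le_mul_of_nonneg_left (by linarith : 1 - t ≤ 1) hb.le
      linarith
    have hP0 : 0 ≤ ((1 - t) * b * (N : ℝ) - (k : ℝ)) * (a * t) :=
      mul_nonneg (by linarith) hat0
    have hP1 : ((1 - t) * b * (N : ℝ) - (k : ℝ)) * (a * t) ≤ 1 * (a * t) :=
      mul_le_mul_of_nonneg_right (by linarith) hat0
    have hQ0 : 0 ≤ (t * a * (N : ℝ) - (m : ℝ)) * (b * (1 - t)) :=
      mul_nonneg (by linarith) hbt0
    have hQ1 : (t * a * (N : ℝ) - (m : ℝ)) * (b * (1 - t)) ≤ 1 * (b * (1 - t)) :=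
      mul_le_mul_of_nonneg_right (by linarith) hbt0
    rw [hexpr, abs_le]
    constructor <;> linarith
  -- the numerator is bounded by C
  have hnum : |x * ((k : ℝ) * a + (m : ℝ) * b + c)
      - ((k : ℝ) * a * A + (m : ℝ) * b * B)| ≤ C := by
    rw [key]
    have htri := abs_sub (x * c) ((B - A) * ((m : ℝ) * b * (1 - t) - (k : ℝ) * a * t))
    have h1 : |x * c| ≤ (|A| + |B|) * c := by
      rw [abs_mul, abs_of_pos hc]
      exact mul_le_mul_of_nonneg_right hxabs hc.le
    have h2 : |(B - A) * ((m : ℝ) * b * (1 - t) - (k : ℝ) * a * t)|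
        ≤ (B - A) * (a + b) := by
      rw [abs_mul, abs_of_nonneg (by linarith : (0:ℝ) ≤ B - A)]
      exact mul_le_mul_of_nonneg_left hE (by linarith)
    rw [hC]
    linarith
  -- put everything together
  have hdiff : x - ((k : ℝ) * a * A + (m : ℝ) * b * B) / ((k : ℝ) * a + (m : ℝ) * b + c)
      = (x * ((k : ℝ) * a + (m : ℝ) * b + c) - ((k : ℝ) * a * A + (m : ℝ) * b * B))
        / ((k : ℝ) * a + (m : ℝ) * b + c) := by
    field_simp
  rw [hdiff, abs_div, abs_of_pos hs_pos]
  have step1 : |x * ((k : ℝ) * a + (m : ℝ) * b + c)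
      - ((k : ℝ) * a * A + (m : ℝ) * b * B)| / ((k : ℝ) * a + (m : ℝ) * b + c)
      ≤ C / (a * b * N - (a + b) + c) :=
    div_le_div₀ hC0 hnum hD_pos (le_of_lt hD)
  have step2 : C / (a * b * N - (a + b) + c) < ε := by
    rw [div_lt_iff₀ hD_pos]
    have h5 : ε * (C / ε + a + b) < ε * (a * b * N) :=
      mul_lt_mul_of_pos_left habN hε
    have h6 : ε * (C / ε + a + b) = C + ε * a + ε * b := by
      field_simp
    have h7 : ε * (a * b * N - (a + b) + c) = ε * (a * b * N) - ε * a - ε * b + ε * c := by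
      ring
    have h8 : 0 < ε * c := mul_pos hε hc
    linarith
  linarith
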